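/- If a graph G has treewidth at most k, then for every r ∈ ℕ, wcol_r(G) ≤ binom(r+k, k). -/

import Mathlib

open SimpleGraph

variable {V : Type*}

/-- Weakly r-reachable vertices from `v` w.r.t. order `L`. -/
def WReach (G : SimpleGraph V) (L : V ↪ ℕ) (r : ℕ) (v : V) : Set V :=
  {u | ∃ p : G.Walk v u, p.IsPath ∧ p.length ≤ r ∧ ∀ w ∈ p.support, L u ≤ L w}

/-- Strongly r-reachable vertices from `v` w.r.t. order `L`. -/
def SReach (G : SimpleGraph V) (L : V ↪ ℕ) (r : ℕ) (v : V) : Set V :=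
  {u | ∃ p : G.Walk v u, p.IsPath ∧ p.length ≤ r ∧ L u ≤ L v ∧
    ∀ w ∈ p.support, w ≠ v → w ≠ u → L v < L w}

/-- r-admissibility of a vertex `v` w.r.t. order `L`. -/
noncomputable def admAt (G : SimpleGraph V) (L : V ↪ ℕ) (r : ℕ) (v : V) : ℕ :=
  sSup {k | ∃ (e : Fin k → V) (p : ∀ i, G.Walk v (e i)),
    ∀ i, (p i).IsPath ∧ (p i).length ≤ r ∧ L (e i) ≤ L v ∧
      ∀ j, i ≠ j → {w | w ∈ (p i).support} ∩ {w | w ∈ (p j).support} = {v}}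

/-- Weak r-colouring number. -/
noncomputable def wcol (G : SimpleGraph V) (r : ℕ) : ℕ :=
  sInf {k | ∃ L : V ↪ ℕ, ∀ v, (WReach G L r v).ncard ≤ k}

/-- r-colouring number. -/
noncomputable def gcol (G : SimpleGraph V) (r : ℕ) : ℕ :=
  sInf {k | ∃ L : V ↪ ℕ, ∀ v, (SReach G L r v).ncard ≤ k}

/-- r-admissibility number. -/
noncomputable def adm (G : SimpleGraph V) (r : ℕ) : ℕ :=
  sInf {k | ∃ L : V ↪ ℕ, ∀ v, admAt G L r v ≤ k}
/-- `(T, bag)` is a tree decomposition of `G`. -/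
def IsTreeDecomp (G : SimpleGraph V) {β : Type} (T : SimpleGraph β) (bag : β → Set V) : Prop :=
  T.IsTree ∧ (∀ v : V, ∃ t, v ∈ bag t) ∧
  (∀ ⦃u v⦄, G.Adj u v → ∃ t, u ∈ bag t ∧ v ∈ bag t) ∧
  (∀ (v : V) (t₁ t₂ : β), v ∈ bag t₁ → v ∈ bag t₂ →
    ∀ (p : T.Walk t₁ t₂), p.IsPath → ∀ t ∈ p.support, v ∈ bag t)

/-- `G` has treewidth at most `k`. -/
def HasTreewidthLE (G : SimpleGraph V) (k : ℕ) : Prop :=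
  ∃ (β : Type) (T : SimpleGraph β) (bag : β → Set V),
    IsTreeDecomp G T bag ∧ ∀ t, (bag t).ncard ≤ k + 1

/-- The treewidth of `G`. -/
noncomputable def treewidth (G : SimpleGraph V) : ℕ := sInf {k | HasTreewidthLE G k}

namespace WcolAux


inductive DR (KK : V → Finset V) : ℕ → V → V → Prop
  | refl (s v) : DR KK s v v
  | step {s v w u} : w ∈ KK v → DR KK s w u → DR KK (s+1) v u

namespace DR
variable {KK : V → Finset V}
lemma succ {s v u} (h : DR KK s v u) : DR KK (s+1) v u := by
  induction h with
  | refl => exact .refl _ _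
  | step hw _ ih => exact .step hw ih
lemma mono {s s' v u} (h : DR KK s v u) (hs : s ≤ s') : DR KK s' v u := by
  induction hs with
  | refl => exact h
  | step _ ih => exact ih.succ
lemma zero_iff {v u} : DR KK 0 v u ↔ u = v := by
  constructor
  · intro h; cases h; rfl
  · rintro rfl; exact .refl _ _
lemma succ_iff {s v u} : DR KK (s+1) v u ↔ u = v ∨ ∃ w ∈ KK v, DR KK s w u := by
  constructor
  · intro h
    cases h with
    | refl => exact .inl rfl
    | step hw h => exact .inr ⟨_, hw, h⟩
  · rintro (rfl | ⟨w, hw, h⟩)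
    · exact .refl _ _
    · exact .step hw h
end DR

def Dset (KK : V → Finset V) (s : ℕ) (v : V) : Set V := {u | DR KK s v u}

lemma Dset_zero (KK : V → Finset V) (v : V) : Dset KK 0 v = {v} := by
  ext u; simp [Dset, DR.zero_iff]
lemma Dset_succ (KK : V → Finset V) (s : ℕ) (v : V) :
    Dset KK (s+1) v = insert v (⋃ w ∈ KK v, Dset KK s w) := by
  ext u; simp [Dset, DR.succ_iff]
lemma Dset_mono (KK : V → Finset V) {s s' : ℕ} (hs : s ≤ s') (v : V) :
    Dset KK s v ⊆ Dset KK s' v := fun _ h => DR.mono h hs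
lemma mem_Dset_self (KK : V → Finset V) (s : ℕ) (v : V) : v ∈ Dset KK s v := DR.refl s v
lemma Dset_subset_of_mem (KK : V → Finset V) {s : ℕ} {w v : V} (hw : w ∈ KK v) :
    Dset KK s w ⊆ Dset KK (s+1) v := fun _ h => DR.step hw h

/-- reindexing of the bound sum -/
lemma sum_shift (s q d : ℕ) :
    ∑ t ∈ Finset.range (d+1), (s + (q + 1 + t)).choose (q + 1 + t)
      = (s + (q + 1)).choose (q + 1)
        + ∑ t ∈ Finset.range d, (s + (q + 2 + t)).choose (q + 2 + t) := by
  rw [Finset.sum_range_succ']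
  simp only [Nat.add_zero]
  rw [add_comm]
  congr 1
  refine Finset.sum_congr rfl fun t _ => ?_
  congr 1 <;> omega

lemma assembly (s q : ℕ) : ∀ d,
    1 + ∑ t ∈ Finset.range d, (s + (q + 1 + t)).choose (q + 1 + t)
      ≤ (s + 1 + (q + d)).choose (q + d) := by
  intro d
  induction d with
  | zero =>
    simpa using Nat.one_le_iff_ne_zero.mpr (Nat.choose_pos (by omega : q ≤ s + 1 + q)).ne'
  | succ d ih =>
    rw [Finset.sum_range_succ, ← add_assoc]
    have e1 : s + (q + 1 + d) = s + 1 + (q + d) := by omega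
    have e2 : q + 1 + d = q + d + 1 := by omega
    have e3 : s + 1 + (q + (d + 1)) = s + 1 + (q + d) + 1 := by omega
    have e4 : q + (d + 1) = q + d + 1 := by omega
    rw [e1, e2, e3, e4, Nat.choose_succ_succ]
    exact Nat.add_le_add_right ih _


section Counting

variable [Fintype V] [DecidableEq V] {L : V ↪ ℕ} {KK : V → Finset V} {k : ℕ}

lemma lemmaG (he : ∀ y a b, a ∈ KK y → b ∈ KK y → L a < L b → a ∈ KK b)
    {s : ℕ}
    (IH : ∀ (y : V) (A : Finset V) (j : ℕ), (∀ a ∈ A, a ∈ KK y) → k ≤ j + A.card →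
      (Dset KK s y \ ⋃ a ∈ A, Dset KK s a).ncard ≤ (s + j).choose j) :
    ∀ (d : ℕ) (Z : Finset V) (y : V) (A : Finset V) (q : ℕ), Z.card = d →
      (∀ x ∈ A, x ∈ KK y) → (∀ x ∈ Z, x ∈ KK y) → Disjoint A Z →
      k ≤ q + d + A.card →
      (⋃ z ∈ Z, (Dset KK s z \ ⋃ a ∈ A, Dset KK (s+1) a)).ncard
        ≤ ∑ t ∈ Finset.range d, (s + (q + 1 + t)).choose (q + 1 + t) := by
  intro d
  induction d with
  | zero =>
    intro Z y A q hcard _ _ _ _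
    rw [Finset.card_eq_zero.mp hcard]
    simp
  | succ d ihd =>
    intro Z y A q hcard hA hZ hdisj hk
    obtain ⟨z, hzZ, hzmax⟩ := Z.exists_max_image (fun x => L x)
      (Finset.card_pos.mp (by omega))
    set U : Set V := ⋃ a ∈ A, Dset KK (s+1) a with hU
    set Z' : Finset V := Z.erase z with hZ'def
    have hZ'card : Z'.card = d := by
      rw [hZ'def, Finset.card_erase_of_mem hzZ, hcard]
      omega
    have hZ'sub : ∀ x ∈ Z', x ∈ KK y := fun x hx => hZ x (Finset.mem_of_mem_erase hx)
    have hdisj' : Disjoint A Z' := hdisj.mono_right (Finset.erase_subset _ _)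
    have hsplit : (⋃ w ∈ Z, (Dset KK s w \ U)) ⊆
        (Dset KK s z \ (U ∪ ⋃ w ∈ Z', Dset KK s w)) ∪ (⋃ w ∈ Z', (Dset KK s w \ U)) := by
      intro x hx
      simp only [Set.mem_iUnion, Set.mem_diff, Set.mem_union, exists_prop] at hx ⊢
      obtain ⟨w, hwZ, hxw, hxU⟩ := hx
      by_cases hxz : ∃ w' , w' ∈ Z' ∧ x ∈ Dset KK s w'
      · obtain ⟨w', h1, h2⟩ := hxz
        exact .inr ⟨w', h1, h2, hxU⟩
      · push_neg at hxz
        have hwz : w = z := by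
          by_contra hne
          exact hxz w (Finset.mem_erase.mpr ⟨hne, hwZ⟩) hxw
        refine .inl ⟨hwz ▸ hxw, ?_⟩
        rintro (h | ⟨w', h1, h2⟩)
        · exact hxU h
        · exact hxz w' h1 h2
    have hbound1 : (Dset KK s z \ (U ∪ ⋃ w ∈ Z', Dset KK s w)).ncard
        ≤ (s + (q + 1)).choose (q + 1) := by
      by_cases hcase : ∃ a ∈ A, L z < L a
      · obtain ⟨a, haA, hla⟩ := hcase
        have hzKa : z ∈ KK a := he y z a (hZ _ hzZ) (hA _ haA) hla
        have hsubU : Dset KK s z ⊆ U := by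
          intro x hx
          simp only [hU, Set.mem_iUnion, exists_prop]
          exact ⟨a, haA, Dset_subset_of_mem KK hzKa hx⟩
        have hempty : Dset KK s z \ (U ∪ ⋃ w ∈ Z', Dset KK s w) = ∅ :=
          Set.diff_eq_empty.mpr (hsubU.trans Set.subset_union_left)
        rw [hempty]
        simp
      · push_neg at hcase
        set B : Finset V := A ∪ Z' with hB
        have hBsub : ∀ b ∈ B, b ∈ KK z := by
          intro b hb
          rcases Finset.mem_union.mp hb with hbA | hbZ'
          · have hne : b ≠ z := fun hh =>
              Finset.disjoint_left.mp hdisj (hh ▸ hbA) hzZ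
            have hlt' : L b < L z :=
              lt_of_le_of_ne (hcase b hbA) (fun hh => hne (L.injective hh))
            exact he y b z (hA _ hbA) (hZ _ hzZ) hlt'
          · obtain ⟨hne, hbZ⟩ := Finset.mem_erase.mp hbZ'
            have hlt' : L b < L z :=
              lt_of_le_of_ne (hzmax b hbZ) (fun hh => hne (L.injective hh))
            exact he y b z (hZ _ hbZ) (hZ _ hzZ) hlt'
        have hBcard : B.card = A.card + d := by
          rw [hB, Finset.card_union_of_disjoint hdisj', hZ'card]
        have hsub2 : Dset KK s z \ (U ∪ ⋃ w ∈ Z', Dset KK s w) ⊆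
            Dset KK s z \ ⋃ b ∈ B, Dset KK s b := by
          intro x hx
          obtain ⟨hx1, hx2⟩ := hx
          refine ⟨hx1, ?_⟩
          intro hmem
          simp only [Set.mem_iUnion, exists_prop] at hmem
          obtain ⟨b, hbB, hxb⟩ := hmem
          rcases Finset.mem_union.mp hbB with hbA | hbZ'
          · refine hx2 (Set.mem_union_left _ ?_)
            simp only [hU, Set.mem_iUnion, exists_prop]
            exact ⟨b, hbA, Dset_mono KK (Nat.le_succ s) b hxb⟩
          · refine hx2 (Set.mem_union_right _ ?_)
            simp only [Set.mem_iUnion, exists_prop]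
            exact ⟨b, hbZ', hxb⟩
        calc (Dset KK s z \ (U ∪ ⋃ w ∈ Z', Dset KK s w)).ncard
            ≤ (Dset KK s z \ ⋃ b ∈ B, Dset KK s b).ncard :=
              Set.ncard_le_ncard hsub2 (Set.toFinite _)
          _ ≤ (s + (q + 1)).choose (q + 1) :=
              IH z B (q + 1) hBsub (by omega)
    have hrec := ihd Z' y A (q + 1) hZ'card hA hZ'sub hdisj' (by omega)
    calc (⋃ w ∈ Z, (Dset KK s w \ U)).ncard
        ≤ ((Dset KK s z \ (U ∪ ⋃ w ∈ Z', Dset KK s w))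
            ∪ (⋃ w ∈ Z', (Dset KK s w \ U))).ncard :=
          Set.ncard_le_ncard hsplit (Set.toFinite _)
      _ ≤ (Dset KK s z \ (U ∪ ⋃ w ∈ Z', Dset KK s w)).ncard
            + (⋃ w ∈ Z', (Dset KK s w \ U)).ncard := Set.ncard_union_le _ _
      _ ≤ (s + (q + 1)).choose (q + 1)
            + ∑ t ∈ Finset.range d, (s + (q + 1 + 1 + t)).choose (q + 1 + 1 + t) :=
          Nat.add_le_add hbound1 hrec
      _ ≤ ∑ t ∈ Finset.range (d+1), (s + (q + 1 + t)).choose (q + 1 + t) := by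
          rw [sum_shift]


lemma claimR (he : ∀ y a b, a ∈ KK y → b ∈ KK y → L a < L b → a ∈ KK b)
    (hcard : ∀ v, (KK v).card ≤ k) :
    ∀ (s : ℕ) (y : V) (A : Finset V) (j : ℕ), (∀ a ∈ A, a ∈ KK y) → k ≤ j + A.card →
      (Dset KK s y \ ⋃ a ∈ A, Dset KK s a).ncard ≤ (s + j).choose j := by
  intro s
  induction s with
  | zero =>
    intro y A j _ _
    calc (Dset KK 0 y \ ⋃ a ∈ A, Dset KK 0 a).ncard
        ≤ (Dset KK 0 y).ncard := Set.ncard_le_ncard Set.diff_subset (Set.toFinite _)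
      _ = 1 := by rw [Dset_zero]; exact Set.ncard_singleton y
      _ ≤ (0 + j).choose j := Nat.one_le_iff_ne_zero.mpr
          (Nat.choose_pos (by omega : j ≤ 0 + j)).ne'
  | succ s ihs =>
    intro y A j hA hk
    have hAsub : A ⊆ KK y := fun a ha => hA a ha
    have hcards : (KK y \ A).card + A.card = (KK y).card :=
      Finset.card_sdiff_add_card_eq_card hAsub
    have hdj : (KK y \ A).card ≤ j := by
      have := hcard y
      omega
    obtain ⟨q, hqd⟩ : ∃ q, q + (KK y \ A).card = j := ⟨j - (KK y \ A).card, by omega⟩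
    have hsplit : Dset KK (s+1) y \ ⋃ a ∈ A, Dset KK (s+1) a ⊆
        insert y (⋃ z ∈ KK y \ A, (Dset KK s z \ ⋃ a ∈ A, Dset KK (s+1) a)) := by
      intro x hx
      obtain ⟨hx1, hx2⟩ := hx
      rw [Dset_succ] at hx1
      rcases hx1 with rfl | hx1
      · exact Set.mem_insert _ _
      · simp only [Set.mem_iUnion, exists_prop] at hx1
        obtain ⟨w, hwK, hxw⟩ := hx1
        by_cases hwA : w ∈ A
        · exfalso
          refine hx2 ?_
          simp only [Set.mem_iUnion, exists_prop]
          exact ⟨w, hwA, Dset_mono KK (Nat.le_succ s) w hxw⟩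
        · refine Set.mem_insert_iff.mpr (.inr ?_)
          simp only [Set.mem_iUnion, exists_prop]
          exact ⟨w, Finset.mem_sdiff.mpr ⟨hwK, hwA⟩, hxw, hx2⟩
    have hG := lemmaG (L := L) (k := k) he (s := s) ihs
      (KK y \ A).card (KK y \ A) y A q rfl hA (fun x hx => (Finset.mem_sdiff.mp hx).1)
      Finset.disjoint_sdiff (by omega)
    calc (Dset KK (s+1) y \ ⋃ a ∈ A, Dset KK (s+1) a).ncard
        ≤ (insert y (⋃ z ∈ KK y \ A, (Dset KK s z \ ⋃ a ∈ A, Dset KK (s+1) a))).ncard :=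
          Set.ncard_le_ncard hsplit (Set.toFinite _)
      _ ≤ (⋃ z ∈ KK y \ A, (Dset KK s z \ ⋃ a ∈ A, Dset KK (s+1) a)).ncard + 1 :=
          Set.ncard_insert_le _ _
      _ ≤ ∑ t ∈ Finset.range (KK y \ A).card, (s + (q + 1 + t)).choose (q + 1 + t) + 1 :=
          Nat.add_le_add_right hG _
      _ = 1 + ∑ t ∈ Finset.range (KK y \ A).card, (s + (q + 1 + t)).choose (q + 1 + t) := by
          omega
      _ ≤ (s + 1 + (q + (KK y \ A).card)).choose (q + (KK y \ A).card) :=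
          assembly s q _
      _ = (s + 1 + j).choose j := by rw [hqd]

end Counting


section Flatten

variable {L : V ↪ ℕ} {KK : V → Finset V}

/-- The "closure" graph of the down-sets `KK`. -/
def Hg (KK : V → Finset V) : SimpleGraph V where
  Adj x y := x ≠ y ∧ (x ∈ KK y ∨ y ∈ KK x)
  symm := ⟨by
    rintro x y ⟨h1, h2⟩
    exact ⟨h1.symm, h2.symm⟩⟩
  loopless := ⟨fun x h => h.1 rfl⟩

lemma Hg_adj {x y : V} : (Hg KK).Adj x y ↔ x ≠ y ∧ (x ∈ KK y ∨ y ∈ KK x) := Iff.rfl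

lemma DR.le_of_DR (hlt : ∀ v, ∀ u ∈ KK v, L u < L v) {s v u} (h : DR KK s v u) :
    L u ≤ L v := by
  induction h with
  | refl => exact le_rfl
  | step hw _ ih => exact ih.trans (hlt _ _ hw).le

lemma DR.exists_walk (hlt : ∀ v, ∀ u ∈ KK v, L u < L v) {s c u} (h : DR KK s c u) :
    ∃ w : (Hg KK).Walk c u, w.length ≤ s ∧ ∀ y ∈ w.support, L u ≤ L y := by
  induction h with
  | refl s v =>
    exact ⟨.nil, by simp, by simp⟩
  | @step s v w u hw hdr ih =>
    obtain ⟨ω, hlen, hsup⟩ := ih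
    have hwv : L w < L v := hlt _ _ hw
    have huw : L u ≤ L w := hdr.le_of_DR hlt
    refine ⟨.cons (Hg_adj.mpr ⟨fun hh => absurd (congrArg L hh) (by omega), .inr hw⟩) ω, by simp [hlen], ?_⟩
    intro y hy
    rw [SimpleGraph.Walk.support_cons] at hy
    rcases List.mem_cons.mp hy with rfl | hy
    · omega
    · exact hsup y hy

lemma flat (hlt : ∀ v, ∀ u ∈ KK v, L u < L v)
    (he : ∀ y a b, a ∈ KK y → b ∈ KK y → L a < L b → a ∈ KK b) :
    ∀ n : ℕ, ∀ (v u : V) (w : (Hg KK).Walk v u), w.length ≤ n →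
      (∀ x ∈ w.support, L u ≤ L x) → DR KK n v u := by
  intro n
  induction n using Nat.strong_induction_on with
  | _ n IH =>
  intro v u w hlen hsup
  cases w with
  | nil => exact .refl n v
  | @cons _ x _ h w' =>
    rw [SimpleGraph.Walk.length_cons] at hlen
    have hn : 1 ≤ n := by omega
    have hsup' : ∀ x' ∈ w'.support, L u ≤ L x' := fun x' hx' =>
      hsup x' (by rw [SimpleGraph.Walk.support_cons]; exact List.mem_cons_of_mem _ hx')
    have huv : L u ≤ L v := hsup v (by rw [SimpleGraph.Walk.support_cons]; exact List.mem_cons_self)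
    have hdr' : DR KK (n-1) x u := IH (n-1) (by omega) x u w' (by omega) hsup'
    rcases h.2 with hvK | hxK
    · -- `v ∈ KK x` : the walk goes up at the first step
      have hvx : L v < L x := hlt x v hvK
      have hux : u ≠ x := fun hh => by rw [hh] at huv; omega
      have hw'pos : 1 ≤ w'.length := by
        rcases Nat.eq_zero_or_pos w'.length with h0 | h1
        · exact absurd (SimpleGraph.Walk.eq_of_length_eq_zero h0).symm hux
        · exact h1
      rcases Nat.exists_eq_add_of_le (by omega : 1 ≤ n - 1) with ⟨m, hm⟩
      rw [hm, Nat.add_comm] at hdr'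
      rcases DR.succ_iff.mp hdr' with rfl | ⟨c, hcK, hdr''⟩
      · exact absurd rfl hux
      · by_cases hcv : c = v
        · subst hcv
          exact hdr''.mono (by omega)
        · rcases lt_or_gt_of_ne (fun hh => hcv (L.injective hh) : L c ≠ L v) with hlt' | hlt'
          · -- L c < L v : shortcut edge from v down to c
            have hcKv : c ∈ KK v := he x c v hcK hvK hlt'
            exact (DR.step hcKv (hdr''.mono (show m ≤ n - 1 by omega))).mono
              (show n - 1 + 1 ≤ n by omega)
          · -- L v < L c : replace the walk by v - c - (chain from c)
            have hvKc : v ∈ KK c := he x v c hvK hcK hlt'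
            obtain ⟨ω, hω1, hω2⟩ := hdr''.exists_walk hlt
            have hne : v ≠ c := fun hh => hcv hh.symm
            have hdn : DR KK (n-1) v u := by
              refine IH (n-1) (by omega) v u (.cons (Hg_adj.mpr ⟨hne, .inl hvKc⟩) ω) ?_ ?_
              · rw [SimpleGraph.Walk.length_cons]
                omega
              · intro x' hx'
                rw [SimpleGraph.Walk.support_cons] at hx'
                rcases List.mem_cons.mp hx' with rfl | hx'
                · exact huv
                · exact hω2 x' hx'
            exact hdn.mono (by omega)
    · -- `x ∈ KK v` : the walk goes down at the first step
      exact (DR.step hxK hdr').mono (show n - 1 + 1 ≤ n by omega)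

end Flatten



section TreePart

variable {β : Type*} {T : SimpleGraph β}

lemma isPath_concat {p : T.Walk t₀ t} (hp : p.IsPath) (h : T.Adj t t') (hns : t' ∉ p.support) :
    (p.concat h).IsPath := by
  rw [← SimpleGraph.Walk.isPath_reverse_iff, SimpleGraph.Walk.reverse_concat]
  apply SimpleGraph.Walk.IsPath.cons
  · rwa [SimpleGraph.Walk.isPath_reverse_iff]
  · rwa [SimpleGraph.Walk.support_reverse, List.mem_reverse]

lemma dist_lt_of_mem_geodesic {r₀ t y : β} {p : T.Walk r₀ t}
    (hlen : p.length = T.dist r₀ t) (hy : y ∈ p.support) (hne : y ≠ t) :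
    T.dist r₀ y < T.dist r₀ t := by
  classical
  have hsplit := congrArg SimpleGraph.Walk.length (p.take_spec hy)
  rw [SimpleGraph.Walk.length_append] at hsplit
  have h1 : T.dist r₀ y ≤ (p.takeUntil y hy).length := SimpleGraph.dist_le _
  have h2 : (p.dropUntil y hy).length ≠ 0 := fun h0 =>
    hne (SimpleGraph.Walk.eq_of_length_eq_zero h0)
  omega

section Tree

variable (r₀ : β)

/-- Depth of a node in the tree rooted at `r₀`. -/
noncomputable def dep (T : SimpleGraph β) (r₀ : β) (t : β) : ℕ := T.dist r₀ t

lemma adj_dep (hT : T.IsTree) (hadj : T.Adj t t') :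
    dep T r₀ t' = dep T r₀ t + 1 ∨ dep T r₀ t = dep T r₀ t' + 1 := by
  have hconn := hT.isConnected
  have h1 : T.dist t t' = 1 := SimpleGraph.dist_eq_one_iff_adj.mpr hadj
  have htri1 : T.dist r₀ t' ≤ T.dist r₀ t + 1 := by
    have := hconn.dist_triangle (u := r₀) (v := t) (w := t'); omega
  have htri2 : T.dist r₀ t ≤ T.dist r₀ t' + 1 := by
    have h1' : T.dist t' t = 1 := SimpleGraph.dist_eq_one_iff_adj.mpr hadj.symm
    have := hconn.dist_triangle (u := r₀) (v := t') (w := t); omega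
  have hne : T.dist r₀ t ≠ T.dist r₀ t' := by
    intro heq
    obtain ⟨p, hp, hplen⟩ := hconn.exists_path_of_dist r₀ t
    have htns : t' ∉ p.support := by
      intro hmem
      by_cases ht't : t' = t
      · exact hadj.ne' ht't
      · have := dist_lt_of_mem_geodesic hplen hmem ht't
        omega
    have hq : (p.concat hadj).IsPath := isPath_concat hp hadj htns
    obtain ⟨p', hp', hp'len⟩ := hconn.exists_path_of_dist r₀ t'
    have := (hT.existsUnique_path r₀ t').unique hq hp'
    have hlen := congrArg SimpleGraph.Walk.length this
    rw [SimpleGraph.Walk.length_concat, hplen, hp'len] at hlen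
    omega
  unfold dep
  omega

lemma parent_exists (hT : T.IsTree) {t : β} (hdep : dep T r₀ t ≠ 0) :
    ∃ t', T.Adj t t' ∧ dep T r₀ t' + 1 = dep T r₀ t := by
  have hconn := hT.isConnected
  obtain ⟨p, hp, hplen⟩ := hconn.exists_path_of_dist r₀ t
  cases hrev : p.reverse with
  | nil =>
    exfalso
    have := congrArg SimpleGraph.Walk.length hrev
    rw [SimpleGraph.Walk.length_reverse, hplen] at this
    exact hdep this
  | @cons _ x _ h w =>
    refine ⟨x, h, ?_⟩
    have hlenw : w.length + 1 = T.dist r₀ t := by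
      have := congrArg SimpleGraph.Walk.length hrev
      rw [SimpleGraph.Walk.length_reverse, hplen] at this
      rw [SimpleGraph.Walk.length_cons] at this
      omega
    have hdx : T.dist r₀ x ≤ w.length := by
      have := SimpleGraph.dist_le w.reverse
      rwa [SimpleGraph.Walk.length_reverse] at this
    rcases adj_dep r₀ hT h with h1 | h1
    · exfalso; unfold dep at h1; omega
    · unfold dep at h1 ⊢; omega

lemma parent_unique (hT : T.IsTree) {t t₁ t₂ : β} (h1 : T.Adj t t₁) (hd1 : dep T r₀ t₁ + 1 = dep T r₀ t)
    (h2 : T.Adj t t₂) (hd2 : dep T r₀ t₂ + 1 = dep T r₀ t) : t₁ = t₂ := by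
  by_contra hne
  have hconn := hT.isConnected
  obtain ⟨p₁, hp₁, hl₁⟩ := hconn.exists_path_of_dist r₀ t₁
  obtain ⟨p₂, hp₂, hl₂⟩ := hconn.exists_path_of_dist r₀ t₂
  have hm : dep T r₀ t₁ = dep T r₀ t₂ := by omega
  have hts : ∀ (t' : β) (p : T.Walk r₀ t'), p.length = T.dist r₀ t' →
      dep T r₀ t' + 1 = dep T r₀ t → t ∉ p.support := by
    intro t' p hplen hdt' hmem
    by_cases htt' : t = t'
    · subst htt'; unfold dep at hdt'; omega
    · have := dist_lt_of_mem_geodesic hplen hmem htt'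
      unfold dep at hdt'; omega
  have hq₁ : (p₁.concat h1.symm).IsPath := isPath_concat hp₁ h1.symm (hts t₁ p₁ hl₁ hd1)
  have hq₂ : (p₂.concat h2.symm).IsPath := isPath_concat hp₂ h2.symm (hts t₂ p₂ hl₂ hd2)
  have hqq := (hT.existsUnique_path r₀ t).unique hq₁ hq₂
  -- t₁ is in the support of q₁ but not q₂
  have hmem₁ : t₁ ∈ (p₁.concat h1.symm).support := by
    rw [SimpleGraph.Walk.support_concat]
    exact List.mem_append.mpr (.inl (SimpleGraph.Walk.end_mem_support p₁))
  rw [hqq, SimpleGraph.Walk.support_concat] at hmem₁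
  rcases List.mem_append.mp hmem₁ with hmem₁ | hmem₁
  · by_cases ht₁₂ : t₁ = t₂
    · exact hne ht₁₂
    · have := dist_lt_of_mem_geodesic hl₂ hmem₁ ht₁₂
      unfold dep at hm; omega
  · rw [List.mem_singleton] at hmem₁
    subst hmem₁
    omega


variable (hT : T.IsTree)

/-- Parent function of the tree rooted at `r₀`. -/
noncomputable def par (hT : T.IsTree) (r₀ : β) (t : β) : β :=
  if h : dep T r₀ t = 0 then t else (parent_exists r₀ hT h).choose

lemma par_spec {t : β} (h : dep T r₀ t ≠ 0) :
    T.Adj t (par hT r₀ t) ∧ dep T r₀ (par hT r₀ t) + 1 = dep T r₀ t := by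
  unfold par
  rw [dif_neg h]
  exact (parent_exists r₀ hT h).choose_spec

lemma par_eq_of {t t' : β} (hadj : T.Adj t t') (hd : dep T r₀ t' + 1 = dep T r₀ t) :
    par hT r₀ t = t' := by
  have h0 : dep T r₀ t ≠ 0 := by omega
  exact parent_unique r₀ hT (par_spec r₀ hT h0).1 (par_spec r₀ hT h0).2 hadj hd

/-- `i`-th ancestor. -/
noncomputable def anc (hT : T.IsTree) (r₀ : β) (i : ℕ) (t : β) : β := (par hT r₀)^[i] t

lemma anc_zero (t : β) : anc hT r₀ 0 t = t := rfl

lemma anc_succ' (i : ℕ) (t : β) : anc hT r₀ (i+1) t = par hT r₀ (anc hT r₀ i t) :=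
  Function.iterate_succ_apply' _ _ _

lemma anc_succ (i : ℕ) (t : β) : anc hT r₀ (i+1) t = anc hT r₀ i (par hT r₀ t) :=
  Function.iterate_succ_apply _ _ _

lemma dep_anc : ∀ (i : ℕ) (t : β), i ≤ dep T r₀ t →
    dep T r₀ (anc hT r₀ i t) = dep T r₀ t - i := by
  intro i
  induction i with
  | zero => intro t _; rw [anc_zero]; omega
  | succ i ih =>
    intro t hle
    have h1 := ih t (by omega)
    have h0 : dep T r₀ (anc hT r₀ i t) ≠ 0 := by omega
    have h2 := (par_spec r₀ hT h0).2
    rw [anc_succ']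
    omega

lemma walkUp : ∀ (i : ℕ) (t : β), i ≤ dep T r₀ t →
    ∃ p : T.Walk t (anc hT r₀ i t), p.IsPath ∧
      (∀ x ∈ p.support, ∃ i' ≤ i, x = anc hT r₀ i' t) ∧
      (∀ i' ≤ i, anc hT r₀ i' t ∈ p.support) := by
  intro i
  induction i with
  | zero =>
    intro t _
    refine ⟨SimpleGraph.Walk.nil, SimpleGraph.Walk.IsPath.nil, ?_, ?_⟩
    · intro x hx
      change x ∈ [t] at hx; rw [List.mem_singleton] at hx
      exact ⟨0, le_rfl, hx⟩
    · intro i' hi'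
      rw [Nat.le_zero.mp hi']; change anc hT r₀ 0 t ∈ [t]
      exact List.mem_singleton.mpr rfl
  | succ i ih =>
    intro t hle
    obtain ⟨p', hp'path, hp'sub, hp'mem⟩ := ih t (by omega)
    have h0 : dep T r₀ (anc hT r₀ i t) ≠ 0 := by
      have := dep_anc r₀ hT i t (by omega)
      omega
    have hadj : T.Adj (anc hT r₀ i t) (anc hT r₀ (i+1) t) := by
      rw [anc_succ']
      exact (par_spec r₀ hT h0).1
    have hnotmem : anc hT r₀ (i+1) t ∉ p'.support := by
      intro hmem
      obtain ⟨i', hi', heq⟩ := hp'sub _ hmem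
      have d1 := dep_anc r₀ hT (i+1) t hle
      have d2 := dep_anc r₀ hT i' t (by omega)
      rw [heq] at d1
      omega
    refine ⟨p'.concat hadj, isPath_concat hp'path hadj hnotmem, ?_, ?_⟩
    · intro x hx
      rw [SimpleGraph.Walk.support_concat] at hx
      rcases List.mem_append.mp hx with hx | hx
      · obtain ⟨i', hi', heq⟩ := hp'sub _ hx
        exact ⟨i', by omega, heq⟩
      · exact ⟨i+1, le_rfl, List.mem_singleton.mp hx⟩
    · intro i' hi'
      rw [SimpleGraph.Walk.support_concat]
      rcases Nat.lt_or_ge i' (i+1) with hlt | hge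
      · exact List.mem_append.mpr (.inl (hp'mem i' (by omega)))
      · have : i' = i + 1 := by omega
        rw [this]
        exact List.mem_append.mpr (.inr (List.mem_singleton.mpr rfl))

lemma ancestor_of_deep_walk :
    ∀ {t₀ a : β} (p : T.Walk t₀ a), (∀ x ∈ p.support, dep T r₀ a ≤ dep T r₀ x) →
      a = anc hT r₀ (dep T r₀ t₀ - dep T r₀ a) t₀ := by
  intro t₀ a p
  induction p with
  | nil =>
    intro _
    rw [Nat.sub_self, anc_zero]
  | @cons t₀ x a h w ih =>
    intro hsup
    have hsup' : ∀ y ∈ w.support, dep T r₀ a ≤ dep T r₀ y := fun y hy =>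
      hsup y (by rw [SimpleGraph.Walk.support_cons]; exact List.mem_cons_of_mem _ hy)
    have hat₀ : dep T r₀ a ≤ dep T r₀ t₀ :=
      hsup t₀ (SimpleGraph.Walk.start_mem_support _)
    have hax : dep T r₀ a ≤ dep T r₀ x :=
      hsup' x (SimpleGraph.Walk.start_mem_support _)
    have hIH := ih hsup'
    rcases adj_dep r₀ hT h with hc | hc
    · -- dep x = dep t₀ + 1, so t₀ is the parent of x
      have hpar : par hT r₀ x = t₀ := par_eq_of r₀ hT h.symm (by omega)
      have harith : dep T r₀ x - dep T r₀ a = (dep T r₀ t₀ - dep T r₀ a) + 1 := by omega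
      rw [harith, anc_succ, hpar] at hIH
      exact hIH
    · -- dep t₀ = dep x + 1, so x is the parent of t₀
      have hpar : par hT r₀ t₀ = x := par_eq_of r₀ hT h (by omega)
      have harith : dep T r₀ t₀ - dep T r₀ a = (dep T r₀ x - dep T r₀ a) + 1 := by omega
      rw [harith, anc_succ, hpar]
      exact hIH

end Tree

end TreePart

section Construction

open scoped Classical

lemma exists_good_order [Fintype V] (G : SimpleGraph V) (k : ℕ)
    (h : _root_.HasTreewidthLE G k) :
    ∃ (L : V ↪ ℕ) (KK : V → Finset V),
      (∀ v, (KK v).card ≤ k) ∧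
      (∀ v, ∀ u ∈ KK v, L u < L v) ∧
      (∀ ⦃u v⦄, G.Adj u v → L u < L v → u ∈ KK v) ∧
      (∀ y a b, a ∈ KK y → b ∈ KK y → L a < L b → a ∈ KK b) := by
  obtain ⟨β, T, bag, ⟨hTree, hcovV, hcovE, hpaths⟩, hsize⟩ := h
  have hβ : Nonempty β := hTree.isConnected.nonempty
  let r₀ : β := Classical.arbitrary β
  -- the topmost node of the subtree of nodes whose bag contains `v`
  have htop : ∀ v : V, ∃ t : β, v ∈ bag t ∧
      ∀ t', v ∈ bag t' → dep T r₀ t ≤ dep T r₀ t' := by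
    intro v
    obtain ⟨t₀, ht₀⟩ := hcovV v
    have hne : {n | ∃ t, v ∈ bag t ∧ dep T r₀ t = n}.Nonempty := ⟨_, t₀, ht₀, rfl⟩
    obtain ⟨t, htv, htd⟩ := Nat.sInf_mem hne
    refine ⟨t, htv, fun t' ht' => ?_⟩
    rw [htd]
    exact Nat.sInf_le ⟨t', ht', rfl⟩
  choose top htopmem htopmin using htop
  set N := Fintype.card V with hN
  let e : V ≃ Fin N := Fintype.equivFin V
  have heN : ∀ v : V, (e v : ℕ) < N := fun v => (e v).2
  let Lf : V → ℕ := fun v => dep T r₀ (top v) * N + (e v : ℕ)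
  have hLaux : ∀ u v : V, Lf u ≤ Lf v → dep T r₀ (top u) ≤ dep T r₀ (top v) := by
    intro u v huv
    by_contra hcon
    push_neg at hcon
    have h1 := heN u
    have h2 := heN v
    have hm : (dep T r₀ (top v) + 1) * N ≤ dep T r₀ (top u) * N :=
      Nat.mul_le_mul_right N (Nat.succ_le_of_lt hcon)
    rw [Nat.succ_mul] at hm
    have huv' : dep T r₀ (top u) * N + (e u : ℕ) ≤ dep T r₀ (top v) * N + (e v : ℕ) := huv
    generalize dep T r₀ (top u) * N = A at hm huv'
    generalize dep T r₀ (top v) * N = B at hm huv'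
    omega
  have hLinj : Function.Injective Lf := by
    intro u v huv
    have hd1 : dep T r₀ (top u) ≤ dep T r₀ (top v) := hLaux u v huv.le
    have hd2 : dep T r₀ (top v) ≤ dep T r₀ (top u) := hLaux v u huv.ge
    have hd : dep T r₀ (top u) = dep T r₀ (top v) := le_antisymm hd1 hd2
    have huv' : dep T r₀ (top u) * N + (e u : ℕ) = dep T r₀ (top v) * N + (e v : ℕ) := huv
    rw [hd] at huv'
    have : (e u : ℕ) = (e v : ℕ) := by omega
    exact e.injective (Fin.ext this)
  let L : V ↪ ℕ := ⟨Lf, hLinj⟩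
  have hkey : ∀ u v : V, L u < L v → dep T r₀ (top u) ≤ dep T r₀ (top v) := by
    intro u v huv
    exact hLaux u v huv.le
  -- the key geometric fact
  have hU : ∀ (t₀ : β) (x y : V), x ∈ bag t₀ → y ∈ bag t₀ → L x < L y → x ∈ bag (top y) := by
    intro t₀ x y hx hy hxy
    have hanc : ∀ z : V, z ∈ bag t₀ →
        top z = anc hTree r₀ (dep T r₀ t₀ - dep T r₀ (top z)) t₀ ∧
          dep T r₀ (top z) ≤ dep T r₀ t₀ := by
      intro z hz
      have h1 : dep T r₀ (top z) ≤ dep T r₀ t₀ := htopmin z t₀ hz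
      obtain ⟨p, hp⟩ := hTree.existsUnique_path t₀ (top z)
      have hdeep : ∀ s ∈ p.support, dep T r₀ (top z) ≤ dep T r₀ s := by
        intro s hs
        exact htopmin z s (hpaths z t₀ (top z) hz (htopmem z) p hp.1 s hs)
      exact ⟨ancestor_of_deep_walk r₀ hTree p hdeep, h1⟩
    obtain ⟨hax, hdx⟩ := hanc x hx
    obtain ⟨hay, hdy⟩ := hanc y hy
    have hdxy : dep T r₀ (top x) ≤ dep T r₀ (top y) := hkey x y hxy
    obtain ⟨p, hppath, _, hpmem⟩ := walkUp r₀ hTree (dep T r₀ t₀ - dep T r₀ (top x)) t₀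
      (Nat.sub_le _ _)
    have hx' : x ∈ bag (anc hTree r₀ (dep T r₀ t₀ - dep T r₀ (top x)) t₀) := by
      rw [← hax]; exact htopmem x
    have hall := hpaths x t₀ _ hx hx' p hppath
    have hmem : anc hTree r₀ (dep T r₀ t₀ - dep T r₀ (top y)) t₀ ∈ p.support :=
      hpmem _ (Nat.sub_le_sub_left hdxy _)
    have := hall _ hmem
    rwa [← hay] at this
  -- the down-sets
  let KK : V → Finset V := fun v => Set.Finite.toFinset
    (Set.toFinite {u | u ∈ bag (top v) ∧ L u < L v})
  have hKKmem : ∀ u v : V, u ∈ KK v ↔ u ∈ bag (top v) ∧ L u < L v := by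
    intro u v
    simp [KK, Set.Finite.mem_toFinset]
  refine ⟨L, KK, ?_, ?_, ?_, ?_⟩
  · -- cardinality bound
    intro v
    have hsub : (KK v : Set V) ⊆ bag (top v) \ {v} := by
      intro u hu
      rw [Finset.mem_coe, hKKmem] at hu
      refine ⟨hu.1, ?_⟩
      intro huv
      rw [Set.mem_singleton_iff] at huv
      subst huv
      exact lt_irrefl _ hu.2
    have h1 : ((KK v : Set V)).ncard ≤ (bag (top v) \ {v}).ncard :=
      Set.ncard_le_ncard hsub (Set.toFinite _)
    have h2 : (bag (top v) \ {v}).ncard = (bag (top v)).ncard - 1 :=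
      Set.ncard_diff_singleton_of_mem (htopmem v)
    have h3 : 0 < (bag (top v)).ncard :=
      (Set.ncard_pos (Set.toFinite _)).mpr ⟨v, htopmem v⟩
    have h4 := hsize (top v)
    rw [Set.ncard_coe_finset] at h1
    omega
  · intro v u hu
    exact ((hKKmem u v).mp hu).2
  · intro u v hadj huv
    obtain ⟨t, hut, hvt⟩ := hcovE hadj
    exact (hKKmem u v).mpr ⟨hU t u v hut hvt huv, huv⟩
  · intro y a b ha hb hab
    rw [hKKmem] at ha hb ⊢
    exact ⟨hU (top y) a b ha.1 hb.1 hab, hab⟩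

end Construction

end WcolAux

/-- if tw(G) ≤ k then wcol_r(G) ≤ binom(r+k, k). -/
theorem wcol_le_choose_of_treewidth [Fintype V] (G : SimpleGraph V) (k r : ℕ)
    (h : HasTreewidthLE G k) : wcol G r ≤ (r + k).choose k := by
  classical
  obtain ⟨L, KK, hcard, hlt, hc, he⟩ := WcolAux.exists_good_order G k h
  apply Nat.sInf_le
  refine ⟨L, fun v => ?_⟩
  have hGH : G ≤ WcolAux.Hg KK := by
    intro a b hab
    refine ⟨hab.ne, ?_⟩
    rcases Nat.lt_trichotomy (L a) (L b) with hl | hl | hl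
    · exact .inl (hc hab hl)
    · exact absurd (L.injective hl) hab.ne
    · exact .inr (hc hab.symm hl)
  have hsub : WReach G L r v ⊆ WcolAux.Dset KK r v := by
    rintro u ⟨p, hpath, hlen, hmin⟩
    have hq : (p.mapLe hGH).length ≤ r := by
      rw [SimpleGraph.Walk.length_map]
      exact hlen
    have hqsup : ∀ x ∈ (p.mapLe hGH).support, L u ≤ L x := by
      intro x hx
      apply hmin
      rw [SimpleGraph.Walk.support_map] at hx
      have hid : ⇑(SimpleGraph.Hom.ofLE hGH) = id := rfl
      rwa [hid, List.map_id] at hx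
    exact WcolAux.flat hlt he r v u (p.mapLe hGH) hq hqsup
  have hD := WcolAux.claimR (L := L) (KK := KK) (k := k) he hcard r v ∅ k
    (by intro a ha; exact absurd ha (Finset.notMem_empty a)) (by omega)
  simp only [Finset.notMem_empty, Set.iUnion_of_empty, Set.iUnion_empty, Set.diff_empty] at hD
  calc (WReach G L r v).ncard
      ≤ (WcolAux.Dset KK r v).ncard := Set.ncard_le_ncard hsub (Set.toFinite _)
    _ ≤ (r + k).choose k := hD
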